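/- Let T : ℝ^N → ℝ^M be a linear map, μ > 0, r₂ > 0, λ ≥ 0, and let S ⊆ ℝ^N be a convex set such that ‖T x‖ ≥ μ for every x ∈ S. Set L := ‖T‖²(2r₂/μ + λ), where ‖T‖ is the operator norm of T. Then the function x ↦ (L/2)‖x‖² − r₂‖T x‖ − (λ/2)‖T x‖² is convex on S; equivalently, the function x ↦ −r₂‖T x‖ − (λ/2)‖T x‖² is weakly convex on S with modulus L. -/

import Mathlib

private lemma comb_sq {E : Type*} [NormedAddCommGroup E] [InnerProductSpace ℝ E]
    (u v : E) (a b : ℝ) (ha : 0 ≤ a) (hb : 0 ≤ b) (hab : a + b = 1) :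
    a * ‖u‖ ^ 2 + b * ‖v‖ ^ 2 - ‖a • u + b • v‖ ^ 2 = a * b * ‖u - v‖ ^ 2 := by
  have h1 : ‖a • u + b • v‖ ^ 2
      = a ^ 2 * ‖u‖ ^ 2 + 2 * (a * b) * (inner ℝ u v : ℝ) + b ^ 2 * ‖v‖ ^ 2 := by
    rw [norm_add_sq_real, norm_smul, norm_smul, real_inner_smul_left, real_inner_smul_right]
    simp only [Real.norm_eq_abs, abs_of_nonneg ha, abs_of_nonneg hb]
    ring
  have h2 : ‖u - v‖ ^ 2 = ‖u‖ ^ 2 - 2 * (inner ℝ u v : ℝ) + ‖v‖ ^ 2 := by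
    rw [norm_sub_sq_real]
  rw [h1, h2]
  linear_combination (-(a * ‖u‖ ^ 2 + b * ‖v‖ ^ 2)) * hab

private lemma gap_lemma {E : Type*} [NormedAddCommGroup E] [InnerProductSpace ℝ E]
    (u v : E) (a b μ : ℝ) (ha : 0 ≤ a) (hb : 0 ≤ b) (hab : a + b = 1) (hμ : 0 < μ)
    (hu : μ ≤ ‖u‖) (hv : μ ≤ ‖v‖) (hw : μ ≤ ‖a • u + b • v‖) :
    (a * ‖u‖ + b * ‖v‖ - ‖a • u + b • v‖) * (2 * μ) ≤ a * b * ‖u - v‖ ^ 2 := by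
  have h1 : ‖a • u + b • v‖ ^ 2
      = a ^ 2 * ‖u‖ ^ 2 + 2 * (a * b) * (inner ℝ u v : ℝ) + b ^ 2 * ‖v‖ ^ 2 := by
    rw [norm_add_sq_real, norm_smul, norm_smul, real_inner_smul_left, real_inner_smul_right]
    simp only [Real.norm_eq_abs, abs_of_nonneg ha, abs_of_nonneg hb]
    ring
  have h2 : ‖u - v‖ ^ 2 = ‖u‖ ^ 2 - 2 * (inner ℝ u v : ℝ) + ‖v‖ ^ 2 := by
    rw [norm_sub_sq_real]
  have htri : ‖a • u + b • v‖ ≤ a * ‖u‖ + b * ‖v‖ := by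
    calc ‖a • u + b • v‖ ≤ ‖a • u‖ + ‖b • v‖ := norm_add_le _ _
      _ = a * ‖u‖ + b * ‖v‖ := by
          rw [norm_smul, norm_smul]
          simp [Real.norm_eq_abs, abs_of_nonneg ha, abs_of_nonneg hb]
  have hA : μ ≤ a * ‖u‖ + b * ‖v‖ := by
    nlinarith [mul_le_mul_of_nonneg_left hu ha, mul_le_mul_of_nonneg_left hv hb]
  have hP : (a * ‖u‖ + b * ‖v‖ - ‖a • u + b • v‖) * (2 * μ)
      ≤ (a * ‖u‖ + b * ‖v‖ - ‖a • u + b • v‖) * ((a * ‖u‖ + b * ‖v‖) + ‖a • u + b • v‖) :=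
    mul_le_mul_of_nonneg_left (by linarith) (sub_nonneg.2 htri)
  have hQ : (a * ‖u‖ + b * ‖v‖ - ‖a • u + b • v‖) * ((a * ‖u‖ + b * ‖v‖) + ‖a • u + b • v‖)
      = 2 * (a * b) * (‖u‖ * ‖v‖ - (inner ℝ u v : ℝ)) := by
    linear_combination (-1 : ℝ) * h1
  have hR : 2 * (a * b) * (‖u‖ * ‖v‖ - (inner ℝ u v : ℝ)) ≤ a * b * ‖u - v‖ ^ 2 := by
    have h2' : a * b * ‖u - v‖ ^ 2
        = a * b * ‖u‖ ^ 2 - 2 * (a * b) * (inner ℝ u v : ℝ) + a * b * ‖v‖ ^ 2 := by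
      linear_combination (a * b) * h2
    nlinarith [mul_nonneg (mul_nonneg ha hb) (sq_nonneg (‖u‖ - ‖v‖)), h2']
  linarith [hP, hQ.le, hR]

/-- If `‖Tx‖ ≥ μ > 0` on the convex set `S` and
`L = ‖T‖²(2r₂/μ + λ)`, then `x ↦ (L/2)‖x‖² − r₂‖Tx‖ − (λ/2)‖Tx‖²` is convex on `S`,
i.e. `x ↦ −r₂‖Tx‖ − (λ/2)‖Tx‖²` is weakly convex on `S` with modulus `L`. -/
theorem stmt_17 (N M : ℕ)
    (T : EuclideanSpace ℝ (Fin N) →L[ℝ] EuclideanSpace ℝ (Fin M))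
    (μ r₂ lam : ℝ) (hμ : 0 < μ) (hr₂ : 0 < r₂) (hlam : 0 ≤ lam)
    (S : Set (EuclideanSpace ℝ (Fin N))) (hS : Convex ℝ S)
    (hTS : ∀ x ∈ S, μ ≤ ‖T x‖) :
    ConvexOn ℝ S (fun x =>
      (‖T‖ ^ 2 * (2 * r₂ / μ + lam) / 2) * ‖x‖ ^ 2 - r₂ * ‖T x‖ - (lam / 2) * ‖T x‖ ^ 2) := by
  refine ⟨hS, fun x hx y hy a b ha hb hab => ?_⟩
  simp only [smul_eq_mul]
  set u := T x with hu
  set v := T y with hv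
  have hmem : a • x + b • y ∈ S := hS hx hy ha hb hab
  have hTw : T (a • x + b • y) = a • u + b • v := by
    simp [map_add, map_smul, hu, hv]
  have e1 : a * ‖x‖ ^ 2 + b * ‖y‖ ^ 2 - ‖a • x + b • y‖ ^ 2 = a * b * ‖x - y‖ ^ 2 :=
    comb_sq x y a b ha hb hab
  have e2 : a * ‖u‖ ^ 2 + b * ‖v‖ ^ 2 - ‖a • u + b • v‖ ^ 2 = a * b * ‖u - v‖ ^ 2 :=
    comb_sq u v a b ha hb hab
  have hwμ : μ ≤ ‖a • u + b • v‖ := by rw [← hTw]; exact hTS _ hmem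
  have hgap : (a * ‖u‖ + b * ‖v‖ - ‖a • u + b • v‖) * (2 * μ) ≤ a * b * ‖u - v‖ ^ 2 :=
    gap_lemma u v a b μ ha hb hab hμ (hTS x hx) (hTS y hy) hwμ
  have hopn : ‖u - v‖ ≤ ‖T‖ * ‖x - y‖ := by
    rw [hu, hv, ← map_sub]; exact T.le_opNorm _
  have h3 : ‖u - v‖ ^ 2 ≤ ‖T‖ ^ 2 * ‖x - y‖ ^ 2 := by
    nlinarith [norm_nonneg (u - v), norm_nonneg (x - y), norm_nonneg T]
  have hab0 : 0 ≤ a * b := mul_nonneg ha hb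
  set D := a * b * ‖x - y‖ ^ 2 with hD
  have hD0 : 0 ≤ D := mul_nonneg hab0 (sq_nonneg _)
  have k1 : a * b * ‖u - v‖ ^ 2 ≤ ‖T‖ ^ 2 * D := by
    rw [hD]; nlinarith [mul_le_mul_of_nonneg_left h3 hab0]
  -- bound on the norm gap
  have hg : a * ‖u‖ + b * ‖v‖ - ‖a • u + b • v‖ ≤ ‖T‖ ^ 2 * D / (2 * μ) := by
    rw [le_div_iff₀ (by positivity)]
    linarith [hgap, k1]
  have k2 : r₂ * (a * ‖u‖ + b * ‖v‖ - ‖a • u + b • v‖) ≤ r₂ / μ * (‖T‖ ^ 2 * D) := by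
    have hq : r₂ / μ * μ = r₂ := div_mul_cancel₀ r₂ hμ.ne'
    have hq0 : (0:ℝ) ≤ r₂ / μ := by positivity
    have step : r₂ / μ * ((a * ‖u‖ + b * ‖v‖ - ‖a • u + b • v‖) * (2 * μ))
        ≤ r₂ / μ * (‖T‖ ^ 2 * D) :=
      mul_le_mul_of_nonneg_left (hgap.trans k1) hq0
    have heq : r₂ / μ * ((a * ‖u‖ + b * ‖v‖ - ‖a • u + b • v‖) * (2 * μ))
        = 2 * (r₂ * (a * ‖u‖ + b * ‖v‖ - ‖a • u + b • v‖)) := by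
      linear_combination (2 * (a * ‖u‖ + b * ‖v‖ - ‖a • u + b • v‖)) * hq
    have h6 : 0 ≤ r₂ / μ * (‖T‖ ^ 2 * D) := by positivity
    linarith [step, heq.le, heq.ge, h6]
  have k3 : lam / 2 * (a * ‖u‖ ^ 2 + b * ‖v‖ ^ 2 - ‖a • u + b • v‖ ^ 2)
      ≤ lam / 2 * (‖T‖ ^ 2 * D) := by
    have := mul_le_mul_of_nonneg_left (e2.le.trans k1) (by linarith : (0:ℝ) ≤ lam / 2)
    linarith
  have hcD : ‖T‖ ^ 2 * (2 * r₂ / μ + lam) / 2 * D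
      = r₂ / μ * (‖T‖ ^ 2 * D) + lam / 2 * (‖T‖ ^ 2 * D) := by ring
  have hcE : ‖T‖ ^ 2 * (2 * r₂ / μ + lam) / 2
        * (a * ‖x‖ ^ 2 + b * ‖y‖ ^ 2 - ‖a • x + b • y‖ ^ 2)
      = ‖T‖ ^ 2 * (2 * r₂ / μ + lam) / 2 * D := by rw [e1]
  rw [hTw]
  linarith [k2, k3, hcD.le, hcD.ge, hcE.le, hcE.ge]
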